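/- (Consensus-error recursion for the x-iterates.) Let W be a gossip matrix with spectral gap parameter ρ ∈ (0,1). Let A ≥ 0, a > 0 and A' := A + a. Given x_i, v_i, x_i⁺ ∈ ℝ^d (i = 1,…,n), set y_i := (A·x_i + a·v_i)/A' and x_i^{new} := ∑_{j=1}^n W_{ij}·x_j⁺. Then A'·Ξ_x^{new} ≤ ρ·A·Ξ_x + (ρ²·A'/(1−ρ))·(1/n)·∑_{i=1}^n ‖x_i⁺ − y_i‖² + ρ·a·Ξ_v, where Ξ_x := (1/n)·∑_i ‖x_i − x̄‖², Ξ_v := (1/n)·∑_i ‖v_i − v̄‖², Ξ_x^{new} := (1/n)·∑_i ‖x_i^{new} − x̄^{new}‖², and x̄, v̄, x̄^{new} denote the respective averages over i. -/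

import Mathlib

open scoped BigOperators

abbrev Vec (d : ℕ) := EuclideanSpace ℝ (Fin d)

private lemma wsq_aux (l m s t : ℝ) (hl : 0 ≤ l) (hm : 0 ≤ m) (h : l + m = 1) :
    (l * s + m * t) ^ 2 ≤ l * s ^ 2 + m * t ^ 2 := by
  nlinarith [sq_nonneg (s - t), mul_nonneg hl hm]

private lemma variance_le {E : Type*} [NormedAddCommGroup E] [InnerProductSpace ℝ E]
    {n : ℕ} (hn : 1 ≤ n) (w : Fin n → E) :
    ∑ i, ‖w i - (1 / (n : ℝ)) • ∑ k, w k‖ ^ 2 ≤ ∑ i, ‖w i‖ ^ 2 := by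
  have hn0 : (0 : ℝ) < n := by exact_mod_cast hn
  set m : E := (1 / (n : ℝ)) • ∑ k, w k with hm
  have hsumw : ∑ k, w k = (n : ℝ) • m := by
    rw [hm, smul_smul]
    rw [mul_one_div, div_self hn0.ne', one_smul]
  have hexp : ∀ i, ‖w i - m‖ ^ 2
      = ‖w i‖ ^ 2 - 2 * (inner ℝ (w i) m : ℝ) + ‖m‖ ^ 2 := fun i => norm_sub_sq_real _ _
  have hsum : ∑ i, ‖w i - m‖ ^ 2
      = ∑ i, ‖w i‖ ^ 2 - (n : ℝ) * ‖m‖ ^ 2 := by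
    rw [Finset.sum_congr rfl fun i _ => hexp i]
    rw [Finset.sum_add_distrib, Finset.sum_sub_distrib]
    have h1 : ∑ i : Fin n, (2 * (inner ℝ (w i) m : ℝ)) = 2 * ((n : ℝ) * ‖m‖ ^ 2) := by
      rw [← Finset.mul_sum, ← sum_inner, hsumw, real_inner_smul_left,
        real_inner_self_eq_norm_sq]
    have h2 : ∑ _i : Fin n, ‖m‖ ^ 2 = (n : ℝ) * ‖m‖ ^ 2 := by
      rw [Finset.sum_const, Finset.card_univ, Fintype.card_fin, nsmul_eq_mul]
    rw [h1, h2]; ring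
  have : 0 ≤ (n : ℝ) * ‖m‖ ^ 2 := by positivity
  linarith [hsum]

private lemma young_aux (r u e : ℝ) (hr0 : 0 < r) (h1r : 0 < 1 - r) :
    r ^ 2 * (u + e) ^ 2 ≤ r * u ^ 2 + r ^ 2 / (1 - r) * e ^ 2 := by
  rw [div_mul_eq_mul_div, ← sub_le_iff_le_add', le_div_iff₀ h1r]
  nlinarith [mul_nonneg hr0.le (sq_nonneg ((1 - r) * u - r * e)), sq_nonneg ((1-r)*u - r*e)]

set_option maxHeartbeats 1600000 in
/-- Consensus-error recursion for the x-iterates. -/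
theorem stmt_18 (d n : ℕ) (hn : 1 ≤ n)
    (W : Matrix (Fin n) (Fin n) ℝ) (ρ : ℝ) (hρ0 : 0 < ρ) (hρ1 : ρ < 1)
    (hWsymm : ∀ i j, W i j = W j i)
    (hWcol : ∀ j, ∑ i, W i j = 1)
    (hWgap : ∀ z : Fin n → Vec d,
      ∑ i, ‖(∑ j, W i j • z j) - (1 / (n : ℝ)) • ∑ k, z k‖ ^ 2
        ≤ ρ ^ 2 * ∑ i, ‖z i - (1 / (n : ℝ)) • ∑ k, z k‖ ^ 2)
    (A a : ℝ) (hA : 0 ≤ A) (ha : 0 < a)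
    (x v xp y xnew : Fin n → Vec d)
    (hy : ∀ i, y i = (A + a)⁻¹ • (A • x i + a • v i))
    (hxnew : ∀ i, xnew i = ∑ j, W i j • xp j)
    (xbar vbar xbarnew : Vec d)
    (hxbar : xbar = (1 / (n : ℝ)) • ∑ i, x i)
    (hvbar : vbar = (1 / (n : ℝ)) • ∑ i, v i)
    (hxbarnew : xbarnew = (1 / (n : ℝ)) • ∑ i, xnew i)
    (Xix Xiv Xixnew : ℝ)
    (hXix : Xix = (1 / (n : ℝ)) * ∑ i, ‖x i - xbar‖ ^ 2)
    (hXiv : Xiv = (1 / (n : ℝ)) * ∑ i, ‖v i - vbar‖ ^ 2)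
    (hXixnew : Xixnew = (1 / (n : ℝ)) * ∑ i, ‖xnew i - xbarnew‖ ^ 2) :
    (A + a) * Xixnew
      ≤ ρ * A * Xix
        + (ρ ^ 2 * (A + a) / (1 - ρ)) * ((1 / (n : ℝ)) * ∑ i, ‖xp i - y i‖ ^ 2)
        + ρ * a * Xiv := by
  have hn0 : (0 : ℝ) < n := by exact_mod_cast hn
  have hA' : (0 : ℝ) < A + a := by linarith
  have h1ρ : (0 : ℝ) < 1 - ρ := by linarith
  -- means
  set mp : Vec d := (1 / (n : ℝ)) • ∑ k, xp k with hmp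
  set my : Vec d := (1 / (n : ℝ)) • ∑ k, y k with hmy
  -- sums
  set Sx : ℝ := ∑ i, ‖x i - xbar‖ ^ 2 with hSx
  set Sv : ℝ := ∑ i, ‖v i - vbar‖ ^ 2 with hSv
  set Sn : ℝ := ∑ i, ‖xnew i - xbarnew‖ ^ 2 with hSn
  set Sp : ℝ := ∑ i, ‖xp i - mp‖ ^ 2 with hSp
  set Sxy : ℝ := ∑ i, ‖xp i - y i‖ ^ 2 with hSxy
  -- mean preservation
  have hsum_new : ∑ i, xnew i = ∑ i, xp i := by
    calc ∑ i, xnew i = ∑ i, ∑ j, W i j • xp j := by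
          exact Finset.sum_congr rfl fun i _ => hxnew i
      _ = ∑ j, ∑ i, W i j • xp j := Finset.sum_comm
      _ = ∑ j, (∑ i, W i j) • xp j := by
          exact Finset.sum_congr rfl fun j _ => (Finset.sum_smul).symm
      _ = ∑ j, xp j := by
          exact Finset.sum_congr rfl fun j _ => by rw [hWcol j, one_smul]
  have hbarnew : xbarnew = mp := by rw [hxbarnew, hsum_new, hmp]
  -- Step 1: spectral gap
  have step1 : Sn ≤ ρ ^ 2 * Sp := by
    have h := hWgap xp
    rw [hSn, hSp]
    calc ∑ i, ‖xnew i - xbarnew‖ ^ 2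
        = ∑ i, ‖(∑ j, W i j • xp j) - (1 / (n : ℝ)) • ∑ k, xp k‖ ^ 2 := by
          exact Finset.sum_congr rfl fun i _ => by rw [hxnew i, hbarnew, hmp]
      _ ≤ ρ ^ 2 * ∑ i, ‖xp i - (1 / (n : ℝ)) • ∑ k, xp k‖ ^ 2 := h
      _ = ρ ^ 2 * ∑ i, ‖xp i - mp‖ ^ 2 := by rw [hmp]
  -- Step 2: triangle inequality in PiLp 2
  set Pe : PiLp 2 (fun _ : Fin n => Vec d) := WithLp.toLp 2 (fun i => xp i - mp) with hPe
  set Ye : PiLp 2 (fun _ : Fin n => Vec d) := WithLp.toLp 2 (fun i => y i - my) with hYe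
  set We : PiLp 2 (fun _ : Fin n => Vec d) :=
    WithLp.toLp 2 (fun i => (xp i - y i) - (1 / (n : ℝ)) • ∑ k, (xp k - y k)) with hWe
  have hmw : (1 / (n : ℝ)) • ∑ k, (xp k - y k) = mp - my := by
    rw [Finset.sum_sub_distrib, smul_sub, hmp, hmy]
  have hsplit : Pe = Ye + We := by
    refine PiLp.ext fun i => ?_
    rw [PiLp.add_apply]
    show xp i - mp = (y i - my) + ((xp i - y i) - (1 / (n : ℝ)) • ∑ k, (xp k - y k))
    rw [hmw]; abel
  have hnormP : ‖Pe‖ ≤ ‖Ye‖ + ‖We‖ := by rw [hsplit]; exact norm_add_le _ _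
  have hP2 : ‖Pe‖ ^ 2 = Sp := by
    rw [PiLp.norm_sq_eq_of_L2, hSp]
  have hY2 : ‖Ye‖ ^ 2 = ∑ i, ‖y i - my‖ ^ 2 := by
    rw [PiLp.norm_sq_eq_of_L2]
  have hW2 : ‖We‖ ^ 2 ≤ Sxy := by
    rw [PiLp.norm_sq_eq_of_L2]
    exact variance_le hn (fun k => xp k - y k)
  -- Step 3: convexity bound on Sy
  have hmyeq : my = (A + a)⁻¹ • (A • xbar + a • vbar) := by
    rw [hmy, hxbar, hvbar]
    rw [Finset.sum_congr rfl fun i _ => hy i]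
    rw [← Finset.smul_sum, Finset.sum_add_distrib, ← Finset.smul_sum, ← Finset.smul_sum]
    module
  have step3 : ∑ i, ‖y i - my‖ ^ 2 ≤ (A / (A + a)) * Sx + (a / (A + a)) * Sv := by
    have hpt : ∀ i, ‖y i - my‖ ^ 2
        ≤ (A / (A + a)) * ‖x i - xbar‖ ^ 2 + (a / (A + a)) * ‖v i - vbar‖ ^ 2 := by
      intro i
      have hid : y i - my = (A / (A + a)) • (x i - xbar) + (a / (A + a)) • (v i - vbar) := by
        rw [hy i, hmyeq]
        have hfield : A / (A + a) = (A + a)⁻¹ * A := by ring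
        have hfield2 : a / (A + a) = (A + a)⁻¹ * a := by ring
        rw [hfield, hfield2]
        module
      have hnorm : ‖y i - my‖ ≤ (A / (A + a)) * ‖x i - xbar‖ + (a / (A + a)) * ‖v i - vbar‖ := by
        rw [hid]
        refine le_trans (norm_add_le _ _) ?_
        rw [norm_smul, norm_smul, Real.norm_eq_abs, Real.norm_eq_abs,
          abs_of_nonneg (by positivity), abs_of_nonneg (by positivity)]
      have h2 : ‖y i - my‖ ^ 2
          ≤ ((A / (A + a)) * ‖x i - xbar‖ + (a / (A + a)) * ‖v i - vbar‖) ^ 2 := by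
        exact pow_le_pow_left₀ (norm_nonneg _) hnorm 2
      refine h2.trans ?_
      exact wsq_aux _ _ _ _ (by positivity) (by positivity) (by field_simp)
    calc ∑ i, ‖y i - my‖ ^ 2
        ≤ ∑ i, ((A / (A + a)) * ‖x i - xbar‖ ^ 2 + (a / (A + a)) * ‖v i - vbar‖ ^ 2) :=
          Finset.sum_le_sum fun i _ => hpt i
      _ = (A / (A + a)) * Sx + (a / (A + a)) * Sv := by
          rw [Finset.sum_add_distrib, ← Finset.mul_sum, ← Finset.mul_sum, hSx, hSv]
  -- Young's inequality
  set u : ℝ := ‖Ye‖ with hu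
  set e : ℝ := ‖We‖ with he
  have hu0 : 0 ≤ u := norm_nonneg _
  have he0 : 0 ≤ e := norm_nonneg _
  have young : ρ ^ 2 * (u + e) ^ 2 ≤ ρ * u ^ 2 + ρ ^ 2 / (1 - ρ) * e ^ 2 :=
    young_aux ρ u e hρ0 h1ρ
  -- combine
  have hSpue : Sp ≤ (u + e) ^ 2 := by
    rw [← hP2]
    exact pow_le_pow_left₀ (norm_nonneg _) hnormP 2
  have hSyu : u ^ 2 = ∑ i, ‖y i - my‖ ^ 2 := hY2
  have hSu : (A + a) * u ^ 2 ≤ A * Sx + a * Sv := by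
    rw [hSyu]
    have := mul_le_mul_of_nonneg_left step3 hA'.le
    calc (A + a) * ∑ i, ‖y i - my‖ ^ 2
        ≤ (A + a) * ((A / (A + a)) * Sx + (a / (A + a)) * Sv) := this
      _ = A * Sx + a * Sv := by field_simp
  have hSe : e ^ 2 ≤ Sxy := hW2
  have hSxy0 : 0 ≤ Sxy := hSxy ▸ Finset.sum_nonneg fun i _ => sq_nonneg _
  have key : (A + a) * Sn ≤ ρ * A * Sx + (ρ ^ 2 * (A + a) / (1 - ρ)) * Sxy + ρ * a * Sv := by
    have c1 : (A + a) * Sn ≤ (A + a) * (ρ ^ 2 * (u + e) ^ 2) := by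
      have : Sn ≤ ρ ^ 2 * (u + e) ^ 2 :=
        step1.trans (mul_le_mul_of_nonneg_left hSpue (sq_nonneg ρ))
      exact mul_le_mul_of_nonneg_left this hA'.le
    have c2 : (A + a) * (ρ ^ 2 * (u + e) ^ 2)
        ≤ ρ * ((A + a) * u ^ 2) + (ρ ^ 2 * (A + a) / (1 - ρ)) * e ^ 2 := by
      have := mul_le_mul_of_nonneg_left young hA'.le
      calc (A + a) * (ρ ^ 2 * (u + e) ^ 2)
          ≤ (A + a) * (ρ * u ^ 2 + ρ ^ 2 / (1 - ρ) * e ^ 2) := this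
        _ = ρ * ((A + a) * u ^ 2) + (ρ ^ 2 * (A + a) / (1 - ρ)) * e ^ 2 := by ring
    have c3 : ρ * ((A + a) * u ^ 2) ≤ ρ * (A * Sx + a * Sv) :=
      mul_le_mul_of_nonneg_left hSu hρ0.le
    have c4 : (ρ ^ 2 * (A + a) / (1 - ρ)) * e ^ 2 ≤ (ρ ^ 2 * (A + a) / (1 - ρ)) * Sxy :=
      mul_le_mul_of_nonneg_left hSe (by positivity)
    calc (A + a) * Sn ≤ (A + a) * (ρ ^ 2 * (u + e) ^ 2) := c1
      _ ≤ ρ * ((A + a) * u ^ 2) + (ρ ^ 2 * (A + a) / (1 - ρ)) * e ^ 2 := c2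
      _ ≤ ρ * (A * Sx + a * Sv) + (ρ ^ 2 * (A + a) / (1 - ρ)) * Sxy := by linarith
      _ = ρ * A * Sx + (ρ ^ 2 * (A + a) / (1 - ρ)) * Sxy + ρ * a * Sv := by ring
  rw [hXix, hXiv, hXixnew]
  have h1n : (0:ℝ) ≤ 1 / n := by positivity
  have hfin := mul_le_mul_of_nonneg_left key h1n
  ring_nf at hfin ⊢
  linarith
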